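/- For every integer d with 0 ≤ d ≤ n/2, the real vector space H°_{n,d} consisting of 0 together with the harmonic multilinear polynomials in x₁,…,xₙ all of whose monomials have degree exactly d has dimension C(n,d) − C(n,d−1), where C(n,−1) = 0. -/

import Mathlib

open MvPolynomial

/-- A multilinear polynomial: every monomial is squarefree. -/
def IsMultilinear {n : ℕ} (P : MvPolynomial (Fin n) ℝ) : Prop :=
  ∀ m ∈ P.support, ∀ i, m i ≤ 1

/-- A harmonic polynomial: the sum of all partial derivatives vanishes. -/
def IsHarmonic {n : ℕ} (P : MvPolynomial (Fin n) ℝ) : Prop :=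
  ∑ i, MvPolynomial.pderiv i P = 0

/-- A polynomial has pure degree `d` if all of its monomials have degree exactly `d`. -/
def IsPureDegree {n : ℕ} (P : MvPolynomial (Fin n) ℝ) (d : ℕ) : Prop :=
  ∀ m ∈ P.support, (∑ i, m i) = d

/-- The space `H°_{n,d}` of harmonic multilinear polynomials of pure degree `d`
(together with `0`). -/
noncomputable def pureHarmonicMultilinear (n d : ℕ) : Submodule ℝ (MvPolynomial (Fin n) ℝ) where
  carrier := {P | IsMultilinear P ∧ IsHarmonic P ∧ IsPureDegree P d}
  add_mem' := by
    rintro P Q ⟨hP1, hP2, hP3⟩ ⟨hQ1, hQ2, hQ3⟩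
    refine ⟨?_, ?_, ?_⟩
    · intro m hm i
      rcases Finset.mem_union.mp (MvPolynomial.support_add hm) with h | h
      · exact hP1 m h i
      · exact hQ1 m h i
    · unfold IsHarmonic at *
      simp only [map_add, Finset.sum_add_distrib, hP2, hQ2, add_zero]
    · intro m hm
      rcases Finset.mem_union.mp (MvPolynomial.support_add hm) with h | h
      · exact hP3 m h
      · exact hQ3 m h
  zero_mem' := by
    refine ⟨?_, ?_, ?_⟩
    · intro m hm i
      simp [MvPolynomial.support_zero] at hm
    · simp [IsHarmonic]
    · intro m hm
      simp [MvPolynomial.support_zero] at hm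
  smul_mem' := by
    rintro c P ⟨hP1, hP2, hP3⟩
    refine ⟨?_, ?_, ?_⟩
    · intro m hm i
      exact hP1 m (MvPolynomial.support_smul hm) i
    · unfold IsHarmonic at *
      rw [show (∑ i, MvPolynomial.pderiv i (c • P)) = c • ∑ i, MvPolynomial.pderiv i P by
        rw [Finset.smul_sum]
        exact Finset.sum_congr rfl fun i _ => (MvPolynomial.pderiv i).map_smul c P, hP2, smul_zero]
    · intro m hm
      exact hP3 m (MvPolynomial.support_smul hm)

namespace HarmonicAux

variable {n : ℕ}

/-! ### Squarefree monomials and finsets -/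

def toMon (S : Finset (Fin n)) : Fin n →₀ ℕ :=
  ⟨S, fun i => if i ∈ S then 1 else 0, by intro i; simp⟩

@[simp] lemma toMon_apply (S : Finset (Fin n)) (i : Fin n) :
    toMon S i = if i ∈ S then 1 else 0 := rfl

@[simp] lemma toMon_support (S : Finset (Fin n)) : (toMon S).support = S := rfl

lemma toMon_injective : Function.Injective (toMon (n := n)) := fun S T h => by
  rw [← toMon_support S, ← toMon_support T, h]

lemma sum_toMon (S : Finset (Fin n)) : ∑ i, toMon S i = S.card := by
  simp only [toMon_apply]
  rw [Finset.sum_ite_mem, Finset.univ_inter, Finset.card_eq_sum_ones]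

lemma toMon_le_one (S : Finset (Fin n)) (i : Fin n) : toMon S i ≤ 1 := by
  simp only [toMon_apply]; split <;> omega

lemma toMon_support_eq {m : Fin n →₀ ℕ} (hm : ∀ i, m i ≤ 1) : toMon m.support = m := by
  ext i
  simp only [toMon_apply, Finsupp.mem_support_iff]
  have := hm i
  split <;> omega

lemma toMon_sub_single {S : Finset (Fin n)} {i : Fin n} (hi : i ∈ S) :
    toMon S - Finsupp.single i 1 = toMon (S.erase i) := by
  ext j
  rw [Finsupp.tsub_apply]
  by_cases h : j = i
  · subst h; simp [hi]
  · simp [Finsupp.single_apply, Ne.symm h, h, Finset.mem_erase]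

/-! ### The function space -/

abbrev W (n : ℕ) : Type := EuclideanSpace ℝ (Finset (Fin n))

/-- The down operator. -/
noncomputable def Dop : W n →ₗ[ℝ] W n where
  toFun f := WithLp.toLp 2 (fun T => ∑ i ∈ Tᶜ, f (insert i T))
  map_add' f g := by
    ext T
    simp [Finset.sum_add_distrib]
  map_smul' c f := by
    ext T
    simp [Finset.mul_sum]

/-- The up operator. -/
noncomputable def Uop : W n →ₗ[ℝ] W n where
  toFun f := WithLp.toLp 2 (fun S => ∑ j ∈ S, f (S.erase j))
  map_add' f g := by
    ext T
    simp [Finset.sum_add_distrib]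
  map_smul' c f := by
    ext T
    simp [Finset.mul_sum]

lemma Dop_apply (f : W n) (T : Finset (Fin n)) :
    Dop f T = ∑ i ∈ Tᶜ, f (insert i T) := rfl

lemma Uop_apply (f : W n) (S : Finset (Fin n)) :
    Uop f S = ∑ j ∈ S, f (S.erase j) := rfl

/-- The xor-with-a-point involution on pairs. -/
def flipPair : Finset (Fin n) × Fin n → Finset (Fin n) × Fin n := fun p =>
  (if p.2 ∈ p.1 then p.1.erase p.2 else insert p.2 p.1, p.2)

lemma flipPair_involutive : Function.Involutive (flipPair (n := n)) := by
  rintro ⟨S, j⟩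
  unfold flipPair
  by_cases h : j ∈ S
  · simp [h, Finset.notMem_erase, Finset.insert_erase h]
  · simp [h, Finset.erase_insert h]

/-- Reindexing of sums over pairs `T ⊂ S` of adjacent finsets. -/
lemma sum_pair {M : Type*} [AddCommMonoid M] (G : Finset (Fin n) → Fin n → M) :
    ∑ S : Finset (Fin n), ∑ j ∈ S, G (S.erase j) j
      = ∑ T : Finset (Fin n), ∑ i ∈ Tᶜ, G T i := by
  have l1 : ∀ S : Finset (Fin n), ∑ j ∈ S, G (S.erase j) j
      = ∑ j : Fin n, if j ∈ S then G (S.erase j) j else 0 := by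
    intro S
    rw [Finset.sum_ite_mem, Finset.univ_inter]
  have l2 : ∀ T : Finset (Fin n), ∑ i ∈ Tᶜ, G T i
      = ∑ i : Fin n, if i ∈ Tᶜ then G T i else 0 := by
    intro T
    rw [Finset.sum_ite_mem, Finset.univ_inter]

  simp only [l1, l2]
  rw [← Fintype.sum_prod_type (f := fun p : Finset (Fin n) × Fin n =>
        if p.2 ∈ p.1 then G (p.1.erase p.2) p.2 else 0),
      ← Fintype.sum_prod_type (f := fun p : Finset (Fin n) × Fin n =>
        if p.2 ∈ p.1ᶜ then G p.1 p.2 else 0)]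
  exact Fintype.sum_equiv (flipPair_involutive.toPerm)
    (fun p => if p.2 ∈ p.1 then G (p.1.erase p.2) p.2 else 0)
    (fun p => if p.2 ∈ p.1ᶜ then G p.1 p.2 else 0)
    (by
      rintro ⟨S, j⟩
      by_cases h : j ∈ S
      · simp [Function.Involutive.toPerm, flipPair, h, Finset.notMem_erase]
      · simp [Function.Involutive.toPerm, flipPair, h])

lemma adjoint_DU (f g : W n) :
    ∑ T : Finset (Fin n), Dop f T * g T = ∑ S : Finset (Fin n), f S * Uop g S := by
  have : ∀ S : Finset (Fin n), f S * Uop g S = ∑ j ∈ S, f S * g (S.erase j) := by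
    intro S; rw [Uop_apply, Finset.mul_sum]
  simp only [this]
  have : ∀ T : Finset (Fin n), Dop f T * g T = ∑ i ∈ Tᶜ, f (insert i T) * g T := by
    intro T; rw [Dop_apply, Finset.sum_mul]
  simp only [this]
  rw [← sum_pair (fun T i => f (insert i T) * g T)]
  refine Finset.sum_congr rfl fun S _ => Finset.sum_congr rfl fun j hj => ?_
  rw [Finset.insert_erase hj]

/-- Pointwise commutator identity. -/
lemma commutator (f : W n) (S : Finset (Fin n)) :
    Dop (Uop f) S + (S.card : ℝ) * f S = Uop (Dop f) S + (Sᶜ.card : ℝ) * f S := by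
  have hDU : Dop (Uop f) S
      = Sᶜ.card • f S + ∑ i ∈ Sᶜ, ∑ j ∈ S, f (insert i (S.erase j)) := by
    rw [Dop_apply]
    have key : ∀ i ∈ Sᶜ, Uop f (insert i S)
        = f S + ∑ j ∈ S, f (insert i (S.erase j)) := by
      intro i hi
      rw [Finset.mem_compl] at hi
      rw [Uop_apply, Finset.sum_insert hi, Finset.erase_insert hi]
      congr 1
      refine Finset.sum_congr rfl fun j hj => ?_
      rw [Finset.erase_insert_of_ne]
      intro h; exact hi (h ▸ hj)
    rw [Finset.sum_congr rfl key, Finset.sum_add_distrib, Finset.sum_const]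
  have hUD : Uop (Dop f) S
      = S.card • f S + ∑ i ∈ Sᶜ, ∑ j ∈ S, f (insert i (S.erase j)) := by
    rw [Uop_apply]
    have key : ∀ j ∈ S, Dop f (S.erase j)
        = f S + ∑ i ∈ Sᶜ, f (insert i (S.erase j)) := by
      intro j hj
      have hj' : j ∉ Sᶜ := by simp [hj]
      rw [Dop_apply, Finset.compl_erase, Finset.sum_insert hj', Finset.insert_erase hj]
    rw [Finset.sum_congr rfl key, Finset.sum_add_distrib, Finset.sum_const, Finset.sum_comm]
  rw [hDU, hUD]
  push_cast [nsmul_eq_mul]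
  ring

/-! ### The graded pieces -/

def V (n d : ℕ) : Submodule ℝ (W n) where
  carrier := {f | ∀ S : Finset (Fin n), S.card ≠ d → f S = 0}
  add_mem' := by
    intro f g hf hg S hS
    have : (f + g) S = f S + g S := rfl
    rw [this, hf S hS, hg S hS, add_zero]
  zero_mem' := fun S _ => rfl
  smul_mem' := by
    intro c f hf S hS
    have : (c • f) S = c * f S := rfl
    rw [this, hf S hS, mul_zero]

lemma mem_V {d : ℕ} {f : W n} : f ∈ V n d ↔ ∀ S : Finset (Fin n), S.card ≠ d → f S = 0 :=
  Iff.rfl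

noncomputable def VEquiv (n d : ℕ) : V n d ≃ₗ[ℝ] ({S : Finset (Fin n) // S.card = d} → ℝ) where
  toFun f := fun S => (f : W n) S.1
  map_add' f g := rfl
  map_smul' c f := rfl
  invFun g := ⟨WithLp.toLp 2 (fun S => if h : S.card = d then g ⟨S, h⟩ else 0), fun S hS => dif_neg hS⟩
  left_inv f := by
    apply Subtype.ext
    ext S
    by_cases h : S.card = d
    · exact dif_pos h
    · rw [show ((⟨WithLp.toLp 2 (fun S => if h : S.card = d then (f : W n) S else 0), fun S hS => dif_neg hS⟩ :
        V n d) : W n) S = if h : S.card = d then (f : W n) S else 0 from rfl, dif_neg h,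
        f.2 S h]
  right_inv g := by
    funext S
    exact dif_pos S.2

lemma finrank_V (n d : ℕ) : Module.finrank ℝ (V n d) = n.choose d := by
  rw [(VEquiv n d).finrank_eq, Module.finrank_fintype_fun_eq_card,
    Fintype.card_finset_len, Fintype.card_fin]

lemma Dop_mem_V {d : ℕ} (hd : 1 ≤ d) {f : W n} (hf : f ∈ V n d) : Dop f ∈ V n (d - 1) := by
  intro T hT
  rw [Dop_apply]
  refine Finset.sum_eq_zero fun i hi => ?_
  rw [Finset.mem_compl] at hi
  refine hf _ fun hcard => ?_
  rw [Finset.card_insert_of_notMem hi] at hcard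
  omega

lemma Uop_mem_V {d : ℕ} (hd : 1 ≤ d) {g : W n} (hg : g ∈ V n (d - 1)) : Uop g ∈ V n d := by
  intro S hS
  rw [Uop_apply]
  refine Finset.sum_eq_zero fun j hj => ?_
  have hc : 1 ≤ S.card := Finset.card_pos.mpr ⟨j, hj⟩
  refine hg _ fun hcard => ?_
  rw [Finset.card_erase_of_mem hj] at hcard
  omega

/-! ### The key estimate -/

open RealInnerProductSpace in
lemma eq_zero_of_U_eq_zero {k : ℕ} (hk : 2 * k < n) {g : W n} (hg : g ∈ V n k)
    (h0 : ⟪Uop g, Uop g⟫ = 0) : g = 0 := by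
  have expand : ∀ x y : W n, ⟪x, y⟫ = ∑ S : Finset (Fin n), x S * y S := by
    intro x y
    rw [PiLp.inner_apply]
    refine Finset.sum_congr rfl fun S _ => ?_
    simp [RCLike.inner_apply]
    ring
  have hkn : (k : ℝ) ≤ n := by
    have : k ≤ n := by omega
    exact_mod_cast this
  have main : ∑ S : Finset (Fin n), Dop (Uop g) S * g S + (k : ℝ) * ∑ S : Finset (Fin n), g S * g S
      = ∑ S : Finset (Fin n), Uop (Dop g) S * g S
        + ((n : ℝ) - k) * ∑ S : Finset (Fin n), g S * g S := by
    rw [Finset.mul_sum, Finset.mul_sum, ← Finset.sum_add_distrib, ← Finset.sum_add_distrib]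
    refine Finset.sum_congr rfl fun S _ => ?_
    by_cases hgS : g S = 0
    · rw [hgS]; ring
    · have hcard : S.card = k := by
        by_contra h
        exact hgS (hg S h)
      have hcompl : (Sᶜ.card : ℝ) = (n : ℝ) - k := by
        rw [Finset.card_compl, Fintype.card_fin, hcard, Nat.cast_sub (by omega)]
      have hcomm := commutator g S
      rw [hcard, hcompl] at hcomm
      linear_combination g S * hcomm
  have e1 : ∑ S : Finset (Fin n), Dop (Uop g) S * g S = ⟪Uop g, Uop g⟫ :=
    (adjoint_DU (Uop g) g).trans (expand (Uop g) (Uop g)).symm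
  have e2 : ∑ S : Finset (Fin n), Uop (Dop g) S * g S = ⟪Dop g, Dop g⟫ :=
    calc ∑ S : Finset (Fin n), Uop (Dop g) S * g S
        = ∑ S : Finset (Fin n), g S * Uop (Dop g) S :=
          Finset.sum_congr rfl fun S _ => mul_comm _ _
      _ = ∑ T : Finset (Fin n), Dop g T * Dop g T := (adjoint_DU g (Dop g)).symm
      _ = ⟪Dop g, Dop g⟫ := (expand _ _).symm
  have e3 : ∑ S : Finset (Fin n), g S * g S = ⟪g, g⟫ := (expand g g).symm
  rw [e1, e2, e3] at main
  have hDg : (0:ℝ) ≤ ⟪Dop g, Dop g⟫ := real_inner_self_nonneg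
  have hgg : (0:ℝ) ≤ ⟪g, g⟫ := real_inner_self_nonneg
  have hnk : (0:ℝ) < (n : ℝ) - 2 * k := by
    have : (2 * k : ℝ) < n := by exact_mod_cast hk
    linarith
  have : ⟪g, g⟫ = (0:ℝ) := by nlinarith
  exact inner_self_eq_zero.mp this

open RealInnerProductSpace in
lemma inner_eq_sum (x y : W n) : ⟪x, y⟫ = ∑ S : Finset (Fin n), x S * y S := by
  rw [PiLp.inner_apply]
  refine Finset.sum_congr rfl fun S _ => ?_
  simp [RCLike.inner_apply]
  ring

noncomputable def Dres (n d : ℕ) (hd : 1 ≤ d) : V n d →ₗ[ℝ] V n (d - 1) :=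
  Dop.restrict (fun _ hx => Dop_mem_V hd hx)

open RealInnerProductSpace in
lemma Dres_surj {d : ℕ} (hd : 1 ≤ d) (hdn : 2 * d ≤ n) :
    LinearMap.range (Dres n d hd) = ⊤ := by
  apply Submodule.orthogonal_eq_bot_iff.mp
  rw [eq_bot_iff]
  rintro g hg
  have hUg : Uop (g : W n) ∈ V n d := Uop_mem_V hd g.2
  have hmem : Dres n d hd ⟨Uop (g : W n), hUg⟩ ∈ LinearMap.range (Dres n d hd) :=
    LinearMap.mem_range_self _ _
  have h0 : ⟪Dres n d hd ⟨Uop (g : W n), hUg⟩, g⟫ = 0 :=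
    (Submodule.mem_orthogonal _ _).mp hg _ hmem
  rw [Submodule.coe_inner] at h0
  have hcoe : ((Dres n d hd ⟨Uop (g : W n), hUg⟩ : V n (d-1)) : W n)
      = Dop (Uop (g : W n)) := rfl
  rw [hcoe] at h0
  have h1 : ⟪Uop (g : W n), Uop (g : W n)⟫ = 0 := by
    rw [inner_eq_sum] at h0 ⊢
    rw [← adjoint_DU (Uop (g : W n)) (g : W n)]
    exact h0
  have hzero : (g : W n) = 0 :=
    eq_zero_of_U_eq_zero (k := d - 1) (by omega) g.2 h1
  simpa [Submodule.mem_bot] using Subtype.ext hzero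

lemma finrank_ker_inf {d : ℕ} (hd : 1 ≤ d) (hdn : 2 * d ≤ n) :
    Module.finrank ℝ ↥(V n d ⊓ LinearMap.ker (Dop (n := n))) + n.choose (d - 1)
      = n.choose d := by
  have hres := LinearMap.finrank_range_add_finrank_ker (Dres n d hd)
  rw [Dres_surj hd hdn, finrank_top, finrank_V] at hres
  have hker : LinearMap.ker (Dres n d hd)
      = Submodule.comap (V n d).subtype (V n d ⊓ LinearMap.ker (Dop (n := n))) := by
    rw [Submodule.comap_inf, Submodule.comap_subtype_self, top_inf_eq]
    exact LinearMap.ker_restrict _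
  have he := (Submodule.comapSubtypeEquivOfLe
    (inf_le_left : V n d ⊓ LinearMap.ker (Dop (n := n)) ≤ V n d)).finrank_eq
  rw [hker, he] at hres
  rw [finrank_V] at hres
  omega

lemma V_zero_le_ker : V n 0 ≤ LinearMap.ker (Dop (n := n)) := by
  intro f hf
  rw [LinearMap.mem_ker]
  ext T
  rw [show (0 : W n) T = 0 from rfl, Dop_apply]
  refine Finset.sum_eq_zero fun i hi => ?_
  rw [Finset.mem_compl] at hi
  exact hf _ (by simp [Finset.card_insert_of_notMem hi])

/-! ### Polynomial encoding -/

noncomputable def Phi (n : ℕ) : MvPolynomial (Fin n) ℝ →ₗ[ℝ] W n where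
  toFun P := WithLp.toLp 2 (fun S => coeff (toMon S) P)
  map_add' P Q := by
    ext S
    show coeff (toMon S) (P + Q) = coeff (toMon S) P + coeff (toMon S) Q
    rw [coeff_add]
  map_smul' c P := by
    ext S
    show coeff (toMon S) (c • P) = c * coeff (toMon S) P
    rw [coeff_smul]
    rfl

noncomputable def Psi (n : ℕ) : W n →ₗ[ℝ] MvPolynomial (Fin n) ℝ where
  toFun f := ∑ S : Finset (Fin n), f S • monomial (toMon S) (1 : ℝ)
  map_add' f g := by
    rw [← Finset.sum_add_distrib]
    refine Finset.sum_congr rfl fun S _ => ?_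
    rw [show (f + g) S = f S + g S from rfl, add_smul]
  map_smul' c f := by
    show (∑ S : Finset (Fin n), (c • f) S • monomial (toMon S) (1 : ℝ))
        = c • ∑ S : Finset (Fin n), f S • monomial (toMon S) (1 : ℝ)
    rw [Finset.smul_sum]
    refine Finset.sum_congr rfl fun S _ => ?_
    rw [show (c • f) S = c * f S from rfl]
    exact (smul_smul c (f S) _).symm

lemma coeff_Psi (f : W n) (S : Finset (Fin n)) : coeff (toMon S) (Psi n f) = f S := by
  show coeff (toMon S) (∑ T : Finset (Fin n), f T • monomial (toMon T) (1 : ℝ)) = f S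
  rw [coeff_sum]
  simp only [coeff_smul, coeff_monomial, toMon_injective.eq_iff, smul_eq_mul,
    mul_ite, mul_one, mul_zero]
  simp

lemma exists_of_coeff_Psi_ne {f : W n} {m : Fin n →₀ ℕ} (h : coeff m (Psi n f) ≠ 0) :
    ∃ S : Finset (Fin n), toMon S = m ∧ f S ≠ 0 := by
  by_contra hc
  push_neg at hc
  apply h
  show coeff m (∑ T : Finset (Fin n), f T • monomial (toMon T) (1 : ℝ)) = 0
  rw [coeff_sum]
  refine Finset.sum_eq_zero fun T _ => ?_
  rw [coeff_smul, coeff_monomial]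
  by_cases hT : toMon T = m
  · rw [if_pos hT, hc T hT]
    simp
  · rw [if_neg hT]
    simp

lemma Phi_Psi (f : W n) : Phi n (Psi n f) = f := by
  ext S
  exact coeff_Psi f S

lemma Psi_injective : Function.Injective (Psi n) := by
  intro f g h
  rw [← Phi_Psi f, ← Phi_Psi g, h]

lemma Psi_Phi {P : MvPolynomial (Fin n) ℝ} (hP : IsMultilinear P) : Psi n (Phi n P) = P := by
  apply MvPolynomial.ext
  intro m
  by_cases hsq : ∀ i, m i ≤ 1
  · have hm : toMon m.support = m := toMon_support_eq hsq
    rw [← hm, coeff_Psi]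
    rfl
  · push_neg at hsq
    obtain ⟨i, hi⟩ := hsq
    have h1 : coeff m P = 0 := by
      rw [← notMem_support_iff]
      intro hmem
      exact absurd (hP m hmem i) (by omega)
    rw [h1]
    by_contra h
    obtain ⟨S, hS, _⟩ := exists_of_coeff_Psi_ne h
    have := toMon_le_one S i
    rw [hS] at this
    omega

lemma pderiv_mono (i : Fin n) (S : Finset (Fin n)) :
    pderiv i (monomial (toMon S) (1 : ℝ))
      = if i ∈ S then monomial (toMon (S.erase i)) (1 : ℝ) else 0 := by
  rw [pderiv_monomial]
  by_cases h : i ∈ S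
  · rw [if_pos h, toMon_sub_single h]
    simp [toMon_apply, h]
  · rw [if_neg h]
    simp [toMon_apply, h]

lemma sum_pderiv_Psi (f : W n) :
    ∑ i, pderiv i (Psi n f) = Psi n (Dop f) := by
  have lhs : ∑ i, pderiv i (Psi n f)
      = ∑ S : Finset (Fin n), ∑ j ∈ S, f S • monomial (toMon (S.erase j)) (1 : ℝ) := by
    have step : ∀ i : Fin n, pderiv i (Psi n f)
        = ∑ S : Finset (Fin n),
            (if i ∈ S then f S • monomial (toMon (S.erase i)) (1 : ℝ) else 0) := by
      intro i
      show pderiv i (∑ S : Finset (Fin n), f S • monomial (toMon S) (1 : ℝ)) = _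
      rw [map_sum]
      refine Finset.sum_congr rfl fun S _ => ?_
      rw [Derivation.map_smul, pderiv_mono]
      split
      · rfl
      · rw [smul_zero]
    simp only [step]
    rw [Finset.sum_comm]
    refine Finset.sum_congr rfl fun S _ => ?_
    rw [Finset.sum_ite_mem, Finset.univ_inter]
  rw [lhs]
  have rhs : Psi n (Dop f)
      = ∑ T : Finset (Fin n), ∑ i ∈ Tᶜ, f (insert i T) • monomial (toMon T) (1 : ℝ) := by
    show ∑ T : Finset (Fin n), Dop f T • monomial (toMon T) (1 : ℝ) = _
    refine Finset.sum_congr rfl fun T _ => ?_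
    rw [Dop_apply, Finset.sum_smul]
  rw [rhs, ← sum_pair (fun T i => f (insert i T) • monomial (toMon T) (1 : ℝ))]
  refine Finset.sum_congr rfl fun S _ => Finset.sum_congr rfl fun j hj => ?_
  rw [Finset.insert_erase hj]

lemma Phi_mem_V {d : ℕ} {P : MvPolynomial (Fin n) ℝ} (hP : IsPureDegree P d) :
    Phi n P ∈ V n d := by
  intro S hS
  show coeff (toMon S) P = 0
  by_contra h
  have hmem : toMon S ∈ P.support := mem_support_iff.mpr h
  have := hP _ hmem
  rw [sum_toMon] at this
  exact hS this

lemma Psi_multilinear (f : W n) : IsMultilinear (Psi n f) := by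
  intro m hmem i
  rw [mem_support_iff] at hmem
  obtain ⟨S, hS, _⟩ := exists_of_coeff_Psi_ne hmem
  rw [← hS]
  exact toMon_le_one S i

lemma Psi_pureDegree {d : ℕ} {f : W n} (hf : f ∈ V n d) : IsPureDegree (Psi n f) d := by
  intro m hmem
  rw [mem_support_iff] at hmem
  obtain ⟨S, hS, hfS⟩ := exists_of_coeff_Psi_ne hmem
  have hcard : S.card = d := by
    by_contra h
    exact hfS (hf S h)
  rw [← hS, sum_toMon, hcard]

lemma Psi_harmonic {f : W n} (hf : f ∈ LinearMap.ker (Dop (n := n))) :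
    IsHarmonic (Psi n f) := by
  unfold IsHarmonic
  rw [sum_pderiv_Psi, LinearMap.mem_ker.mp hf, map_zero]

lemma harmonic_iff {P : MvPolynomial (Fin n) ℝ} (hP : IsMultilinear P) :
    IsHarmonic P ↔ Phi n P ∈ LinearMap.ker (Dop (n := n)) := by
  rw [LinearMap.mem_ker]
  constructor
  · intro h
    apply Psi_injective
    rw [map_zero, ← sum_pderiv_Psi, Psi_Phi hP]
    exact h
  · intro h
    unfold IsHarmonic
    rw [← Psi_Phi hP, sum_pderiv_Psi, h, map_zero]

noncomputable def mainEquiv (n d : ℕ) :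
    ↥(pureHarmonicMultilinear n d) ≃ₗ[ℝ] ↥(V n d ⊓ LinearMap.ker (Dop (n := n))) := by
  have hmap : ∀ P ∈ pureHarmonicMultilinear n d,
      Phi n P ∈ V n d ⊓ LinearMap.ker (Dop (n := n)) := by
    rintro P ⟨h1, h2, h3⟩
    exact ⟨Phi_mem_V h3, (harmonic_iff h1).mp h2⟩
  refine LinearEquiv.ofBijective ((Phi n).restrict hmap) ⟨?_, ?_⟩
  · rintro ⟨P, hP⟩ ⟨Q, hQ⟩ h
    have hcoe : Phi n P = Phi n Q := congrArg Subtype.val h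
    apply Subtype.ext
    calc P = Psi n (Phi n P) := (Psi_Phi hP.1).symm
      _ = Psi n (Phi n Q) := by rw [hcoe]
      _ = Q := Psi_Phi hQ.1
  · rintro ⟨f, hf1, hf2⟩
    refine ⟨⟨Psi n f, Psi_multilinear f, Psi_harmonic hf2, Psi_pureDegree hf1⟩, ?_⟩
    exact Subtype.ext (Phi_Psi f)

end HarmonicAux


/-- For `0 ≤ d ≤ n/2`, the space of harmonic multilinear polynomials of pure degree `d`
has dimension `C(n,d) - C(n,d-1)`, with the convention `C(n,-1) = 0`. -/
theorem finrank_pureHarmonicMultilinear {n d : ℕ} (hd : 2 * d ≤ n) :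
    (Module.finrank ℝ (pureHarmonicMultilinear n d) : ℤ) =
      (n.choose d : ℤ) - (if d = 0 then 0 else (n.choose (d - 1) : ℤ)) := by
  classical
  have he := (HarmonicAux.mainEquiv n d).finrank_eq
  by_cases h0 : d = 0
  · subst h0
    rw [if_pos rfl]
    have hinf : HarmonicAux.V n 0 ⊓ LinearMap.ker (HarmonicAux.Dop (n := n))
        = HarmonicAux.V n 0 := inf_eq_left.mpr HarmonicAux.V_zero_le_ker
    rw [he, hinf, HarmonicAux.finrank_V]
    simp
  · rw [if_neg h0]
    have hk := HarmonicAux.finrank_ker_inf (n := n) (d := d) (by omega) hd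
    rw [he]
    omega
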